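/- Let φ be a strictly convex norm on ℝⁿ, K ⊆ ℝⁿ closed, 0 < s < t < ∞, 1 < λ < ∞, and K_{λ,s,t} = {x : ρ_K^φ(x) ≥ λ, s ≤ δ_K^φ(x) ≤ t}. Then the nearest point projection ξ_K^φ restricted to K_{λ,s,t} is (single-valued and) uniformly continuous. -/

import Mathlib

open Set Filter Metric MeasureTheory Topology ENNReal

noncomputable section

abbrev Euc (n : ℕ) := EuclideanSpace ℝ (Fin n)

def IsNorm {n : ℕ} (φ : Euc n → ℝ) : Prop :=
  (∀ x, φ x = 0 ↔ x = 0) ∧ (∀ (c : ℝ) (x : Euc n), φ (c • x) = |c| * φ x) ∧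
    (∀ x y, φ (x + y) ≤ φ x + φ y)

def StrictlyConvexNorm {n : ℕ} (φ : Euc n → ℝ) : Prop :=
  IsNorm φ ∧ ∀ a b, φ (a + b) = φ a + φ b → φ b • a = φ a • b

def UniformlyConvexNorm {n : ℕ} (φ : Euc n → ℝ) : Prop :=
  IsNorm φ ∧ ∃ γ : ℝ, 0 < γ ∧ ConvexOn ℝ Set.univ (fun x => φ x - γ * ‖x‖)

def distφ {n : ℕ} (φ : Euc n → ℝ) (K : Set (Euc n)) (x : Euc n) : ℝ :=
  sInf {r | ∃ y ∈ K, r = φ (x - y)}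

def nearφ {n : ℕ} (φ : Euc n → ℝ) (K : Set (Euc n)) (x : Euc n) : Set (Euc n) :=
  {a ∈ K | φ (x - a) = distφ φ K x}

def rhoφ {n : ℕ} (φ : Euc n → ℝ) (K : Set (Euc n)) (x : Euc n) : ℝ≥0∞ :=
  sSup {r : ℝ≥0∞ | ∃ s : ℝ, ∃ a ∈ nearφ φ K x,
    r = ENNReal.ofReal s ∧ distφ φ K (a + s • (x - a)) = s * distφ φ K x}

def normalBundle {n : ℕ} (φ : Euc n → ℝ) (K : Set (Euc n)) : Set (Euc n × Euc n) :=
  {p | p.1 ∈ K ∧ φ p.2 = 1 ∧ ∃ s : ℝ, 0 < s ∧ distφ φ K (p.1 + s • p.2) = s}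

def reachφ {n : ℕ} (φ : Euc n → ℝ) (K : Set (Euc n)) (p : Euc n × Euc n) : ℝ≥0∞ :=
  sSup {r : ℝ≥0∞ | ∃ s : ℝ, 0 < s ∧ r = ENNReal.ofReal s ∧ distφ φ K (p.1 + s • p.2) = s}

def cutLocus {n : ℕ} (φ : Euc n → ℝ) (K : Set (Euc n)) : Set (Euc n) :=
  {x | ∃ p ∈ normalBundle φ K, reachφ φ K p ≠ ⊤ ∧
    x = p.1 + (reachφ φ K p).toReal • p.2}

def PtTwiceDiffAt {n : ℕ} (f : Euc n → ℝ) (x : Euc n) : Prop :=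
  ∃ (L : Euc n →L[ℝ] ℝ) (Q : Euc n →L[ℝ] Euc n →L[ℝ] ℝ),
    Tendsto (fun y => |f y - f x - L (y - x) - Q (y - x) (y - x)| / ‖y - x‖ ^ 2)
      (𝓝[≠] x) (𝓝 0)

namespace IsNorm

variable {n : ℕ} {φ : Euc n → ℝ}

lemma zero' (h : IsNorm φ) : φ 0 = 0 := (h.1 0).2 rfl

lemma neg' (h : IsNorm φ) (x : Euc n) : φ (-x) = φ x := by
  have := h.2.1 (-1) x
  simpa using this

lemma nonneg (h : IsNorm φ) (x : Euc n) : 0 ≤ φ x := by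
  have h1 := h.2.2 x (-x)
  rw [add_neg_cancel, h.zero', h.neg'] at h1
  linarith

lemma sub_comm' (h : IsNorm φ) (x y : Euc n) : φ (x - y) = φ (y - x) := by
  rw [← h.neg' (x - y), neg_sub]

lemma smul_nonneg' (h : IsNorm φ) {c : ℝ} (hc : 0 ≤ c) (x : Euc n) :
    φ (c • x) = c * φ x := by rw [h.2.1, abs_of_nonneg hc]

lemma convexOn (h : IsNorm φ) : ConvexOn ℝ Set.univ φ := by
  refine ⟨convex_univ, fun x _ y _ a b ha hb _ => ?_⟩
  calc φ (a • x + b • y) ≤ φ (a • x) + φ (b • y) := h.2.2 _ _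
    _ = a * φ x + b * φ y := by rw [h.smul_nonneg' ha, h.smul_nonneg' hb]

lemma continuous' (h : IsNorm φ) : Continuous φ := by
  have := h.convexOn.continuousOn isOpen_univ
  rwa [continuousOn_univ] at this

lemma exists_pos_lower (h : IsNorm φ) : ∃ c > (0:ℝ), ∀ z : Euc n, c * ‖z‖ ≤ φ z := by
  rcases isEmpty_or_nonempty (Fin n) with hn | hn
  · refine ⟨1, one_pos, fun z => ?_⟩
    have hz : z = 0 := Subsingleton.elim z 0
    simp [hz, h.zero']
  · obtain ⟨i⟩ := hn
    have hsph : (Metric.sphere (0:Euc n) 1).Nonempty := by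
      refine ⟨EuclideanSpace.single i (1:ℝ), ?_⟩
      simp [EuclideanSpace.norm_single]
    obtain ⟨u, hu, hmin⟩ := (isCompact_sphere (0:Euc n) 1).exists_isMinOn hsph
      h.continuous'.continuousOn
    have hu1 : ‖u‖ = 1 := by simpa using hu
    have hupos : 0 < φ u := by
      rcases (h.nonneg u).lt_or_eq with h' | h'
      · exact h'
      · exfalso
        have : u = 0 := (h.1 u).1 h'.symm
        rw [this] at hu1; simp at hu1
    refine ⟨φ u, hupos, fun z => ?_⟩
    rcases eq_or_ne z 0 with rfl | hz
    · simp [h.zero']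
    · have hznorm : (0:ℝ) < ‖z‖ := norm_pos_iff.mpr hz
      have hmem : ‖z‖⁻¹ • z ∈ Metric.sphere (0:Euc n) 1 := by
        simp [norm_smul, abs_of_nonneg (inv_nonneg.mpr hznorm.le),
          inv_mul_cancel₀ hznorm.ne']
      have hm : φ u ≤ φ (‖z‖⁻¹ • z) := hmin hmem
      have hφs : φ (‖z‖⁻¹ • z) = ‖z‖⁻¹ * φ z :=
        h.smul_nonneg' (inv_nonneg.mpr hznorm.le) z
      rw [hφs] at hm
      calc φ u * ‖z‖ ≤ (‖z‖⁻¹ * φ z) * ‖z‖ :=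
        mul_le_mul_of_nonneg_right hm hznorm.le
        _ = φ z := by field_simp

end IsNorm

lemma modulus {n : ℕ} {φ : Euc n → ℝ} (hφ : StrictlyConvexNorm φ) {ε : ℝ} (hε : 0 < ε) :
    ∃ η > (0:ℝ), ∀ u v : Euc n, φ u = 1 → φ v = 1 → ε ≤ ‖u - v‖ → φ (u + v) ≤ 2 - η := by
  obtain ⟨c, hc, hlow⟩ := hφ.1.exists_pos_lower
  set S : Set (Euc n × Euc n) := {p | φ p.1 = 1 ∧ φ p.2 = 1 ∧ ε ≤ ‖p.1 - p.2‖} with hS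
  rcases S.eq_empty_or_nonempty with hSe | hSne
  · exact ⟨1, one_pos, fun u v h1 h2 h3 =>
      absurd (show (u, v) ∈ S from ⟨h1, h2, h3⟩) (by simp [hSe])⟩
  · have h1 : IsClosed {p : Euc n × Euc n | φ p.1 = 1} :=
      isClosed_eq (hφ.1.continuous'.comp continuous_fst) continuous_const
    have h2 : IsClosed {p : Euc n × Euc n | φ p.2 = 1} :=
      isClosed_eq (hφ.1.continuous'.comp continuous_snd) continuous_const
    have h3 : IsClosed {p : Euc n × Euc n | ε ≤ ‖p.1 - p.2‖} :=
      isClosed_le continuous_const (continuous_fst.sub continuous_snd).norm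
    have hclosed : IsClosed S := (h1.inter (h2.inter h3))
    have hbdd : Bornology.IsBounded S := by
      have hsub : S ⊆ (Metric.closedBall (0:Euc n) (1/c)) ×ˢ (Metric.closedBall (0:Euc n) (1/c)) := by
        rintro ⟨u, v⟩ ⟨hu, hv, -⟩
        have hub : ‖u‖ ≤ 1/c := by
          have := hlow u; rw [hu] at this
          rw [le_div_iff₀ hc, mul_comm]; linarith
        have hvb : ‖v‖ ≤ 1/c := by
          have := hlow v; rw [hv] at this
          rw [le_div_iff₀ hc, mul_comm]; linarith
        exact ⟨by simpa using hub, by simpa using hvb⟩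
      exact (Metric.isBounded_closedBall.prod Metric.isBounded_closedBall).subset hsub
    have hcpt : IsCompact S := Metric.isCompact_of_isClosed_isBounded hclosed hbdd
    have hcont : Continuous (fun p : Euc n × Euc n => φ (p.1 + p.2)) :=
      hφ.1.continuous'.comp (continuous_fst.add continuous_snd)
    obtain ⟨p, hpS, hmax⟩ := hcpt.exists_isMaxOn hSne hcont.continuousOn
    have hlt : φ (p.1 + p.2) < 2 := by
      rcases lt_or_eq_of_le (show φ (p.1 + p.2) ≤ φ p.1 + φ p.2 from hφ.1.2.2 _ _) with h' | h'
      · rw [hpS.1, hpS.2.1] at h'; linarith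
      · exfalso
        have := hφ.2 p.1 p.2 h'
        rw [hpS.1, hpS.2.1, one_smul, one_smul] at this
        have h0 := hpS.2.2
        rw [this] at h0
        simp at h0
        linarith
    refine ⟨2 - φ (p.1 + p.2), by linarith, fun u v hu hv huv => ?_⟩
    have h4 : φ (u + v) ≤ φ (p.1 + p.2) := hmax (show (u, v) ∈ S from ⟨hu, hv, huv⟩)
    linarith

section distlemmas

variable {n : ℕ} {φ : Euc n → ℝ} {K : Set (Euc n)}

lemma distφ_bddBelow (h : IsNorm φ) (x : Euc n) :
    BddBelow {r | ∃ y ∈ K, r = φ (x - y)} :=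
  ⟨0, fun r ⟨y, _, hr⟩ => hr ▸ h.nonneg _⟩

lemma distφ_le (h : IsNorm φ) {k : Euc n} (hk : k ∈ K) (x : Euc n) :
    distφ φ K x ≤ φ (x - k) :=
  csInf_le (distφ_bddBelow h x) ⟨k, hk, rfl⟩

lemma distφ_lip (h : IsNorm φ) (hKne : K.Nonempty) (x y : Euc n) :
    distφ φ K x ≤ distφ φ K y + φ (x - y) := by
  have hne : {r | ∃ k ∈ K, r = φ (y - k)}.Nonempty :=
    ⟨φ (y - hKne.choose), hKne.choose, hKne.choose_spec, rfl⟩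
  have : distφ φ K x - φ (x - y) ≤ distφ φ K y := by
    apply le_csInf hne
    rintro r ⟨k, hk, rfl⟩
    have htri : φ (x - k) ≤ φ (x - y) + φ (y - k) := by
      have := h.2.2 (x - y) (y - k)
      have heq : (x - y) + (y - k) = x - k := by abel
      rwa [heq] at this
    have hle := distφ_le h hk x
    linarith
  linarith

lemma dist_scale (h : IsNorm φ) {x a : Euc n} {s' σ : ℝ}
    (ha : a ∈ nearφ φ K x)
    (hd : distφ φ K (a + s' • (x - a)) = s' * distφ φ K x)
    (hσ0 : 0 ≤ σ) (hσs : σ ≤ s') :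
    distφ φ K (a + σ • (x - a)) = σ * distφ φ K x := by
  have haK : a ∈ K := ha.1
  have haφ : φ (x - a) = distφ φ K x := ha.2
  have hKne : K.Nonempty := ⟨a, haK⟩
  have hup : distφ φ K (a + σ • (x - a)) ≤ σ * distφ φ K x := by
    have := distφ_le h haK (a + σ • (x - a))
    have heq : a + σ • (x - a) - a = σ • (x - a) := by abel
    rw [heq, h.smul_nonneg' hσ0, haφ] at this
    exact this
  have hlo : s' * distφ φ K x ≤ distφ φ K (a + σ • (x - a)) + (s' - σ) * distφ φ K x := by
    have hl := distφ_lip h hKne (a + s' • (x - a)) (a + σ • (x - a))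
    have heq : (a + s' • (x - a)) - (a + σ • (x - a)) = (s' - σ) • (x - a) := by
      rw [sub_smul]; abel
    rw [heq, h.smul_nonneg' (by linarith) _, haφ, hd] at hl
    exact hl
  linarith

lemma witness {φ : Euc n → ℝ} (hφ : StrictlyConvexNorm φ) {K : Set (Euc n)} {x : Euc n}
    {lam : ℝ} (hlam : 1 < lam) (hρ : ENNReal.ofReal lam ≤ rhoφ φ K x)
    (hdx : 0 < distφ φ K x) :
    ∃ a ∈ nearφ φ K x, (∀ b ∈ nearφ φ K x, b = a) ∧
      ∀ σ, 0 ≤ σ → σ ≤ (1 + lam) / 2 →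
        distφ φ K (a + σ • (x - a)) = σ * distφ φ K x := by
  have h := hφ.1
  set lam0 := (1 + lam) / 2 with hlam0def
  have hlam01 : 1 < lam0 := by rw [hlam0def]; linarith
  have hlam0lam : lam0 < lam := by rw [hlam0def]; linarith
  have h1 : ENNReal.ofReal lam0 < rhoφ φ K x :=
    lt_of_lt_of_le (ENNReal.ofReal_lt_ofReal_iff (by linarith) |>.mpr hlam0lam) hρ
  rw [rhoφ, lt_sSup_iff] at h1
  obtain ⟨r, hrS, hrlt⟩ := h1
  obtain ⟨s', a, haN, rfl, hd⟩ := hrS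
  have hs' : lam0 < s' := by
    by_contra hcon
    push_neg at hcon
    exact absurd (ENNReal.ofReal_le_ofReal hcon) (not_le.mpr hrlt)
  refine ⟨a, haN, ?_, fun σ h0 h2 => dist_scale h haN hd h0 (h2.trans hs'.le)⟩
  intro b hb
  -- uniqueness via strict convexity
  have haφ : φ (x - a) = distφ φ K x := haN.2
  have hbφ : φ (x - b) = distφ φ K x := hb.2
  set dx := distφ φ K x with hdxdef
  set x' := a + s' • (x - a) with hx'def
  have hs'1 : 1 < s' := lt_trans hlam01 hs'
  have hpx : x' - x = (s' - 1) • (x - a) := by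
    rw [hx'def, sub_smul, one_smul]; abel
  have hφpx : φ (x' - x) = (s' - 1) * dx := by
    rw [hpx, h.smul_nonneg' (by linarith) _, haφ]
  have hsum : (x' - x) + (x - b) = x' - b := by abel
  have hge : s' * dx ≤ φ (x' - b) := by
    have h' := distφ_le h hb.1 x'
    rw [hd] at h'
    exact h'
  have hle : φ (x' - b) ≤ φ (x' - x) + φ (x - b) := by
    have := h.2.2 (x' - x) (x - b)
    rwa [hsum] at this
  have heq : φ ((x' - x) + (x - b)) = φ (x' - x) + φ (x - b) := by
    rw [hsum]
    rw [hφpx, hbφ] at hle ⊢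
    have hr : (s' - 1) * dx + dx = s' * dx := by ring
    have : φ (x' - b) ≥ (s' - 1) * dx + dx := by linarith only [hge, hr]
    linarith
  have hsc := hφ.2 (x' - x) (x - b) heq
  rw [hφpx, hbφ, hpx] at hsc
  -- hsc : dx • ((s' - 1) • (x - a)) = ((s' - 1) * dx) • (x - b)
  rw [smul_smul] at hsc
  have hne : (s' - 1) * dx ≠ 0 := by
    have : 0 < (s' - 1) * dx := mul_pos (by linarith) hdx
    exact this.ne'
  have hxab : x - a = x - b := by
    have h2 : ((s' - 1) * dx) • (x - a) = ((s' - 1) * dx) • (x - b) := by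
      rw [← hsc]; ring_nf
    exact smul_right_injective _ hne h2
  have hab : a = b := by
    have h3 : x - (x - a) = x - (x - b) := by rw [hxab]
    simpa [_root_.sub_sub_cancel] using h3
  exact hab.symm

end distlemmas

set_option maxHeartbeats 2000000 in
theorem stmt11 {n : ℕ} (φ : Euc n → ℝ) (hφ : StrictlyConvexNorm φ) (K : Set (Euc n))
    (hK : IsClosed K) (s t lam : ℝ) (hs : 0 < s) (hst : s < t) (hlam : 1 < lam)
    (Kst : Set (Euc n))
    (hKst : Kst = {x | ENNReal.ofReal lam ≤ rhoφ φ K x ∧ s ≤ distφ φ K x ∧ distφ φ K x ≤ t}) :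
    (∀ x ∈ Kst, ∃ a : Euc n, nearφ φ K x = {a}) ∧
    ∀ ε > (0 : ℝ), ∃ δ > (0 : ℝ), ∀ x ∈ Kst, ∀ y ∈ Kst,
      ∀ a ∈ nearφ φ K x, ∀ b ∈ nearφ φ K y, ‖x - y‖ < δ → ‖a - b‖ < ε := by
  subst hKst
  have hN := hφ.1
  constructor
  · intro x hx
    obtain ⟨hρ, hs1, _⟩ := hx
    have hdx : 0 < distφ φ K x := lt_of_lt_of_le hs hs1
    obtain ⟨a, haN, huniq, -⟩ := witness hφ hlam hρ hdx
    exact ⟨a, Set.eq_singleton_iff_unique_mem.mpr ⟨haN, huniq⟩⟩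
  · intro ε hε
    obtain ⟨c, hc, hlow⟩ := hN.exists_pos_lower
    set lam0 := (1 + lam) / 2 with hlam0def
    have hlam01 : 1 < lam0 := by rw [hlam0def]; linarith
    have htpos : 0 < t := lt_trans hs hst
    set ε' := ε / (2 * t) with hε'def
    have hε'pos : 0 < ε' := div_pos hε (by linarith)
    obtain ⟨η, hη, hmod⟩ := modulus hφ hε'pos
    set m₀ := min ((lam0 - 1) * s) s with hm₀def
    have hm₀pos : 0 < m₀ := lt_min (mul_pos (by linarith) hs) hs
    set e₀ := min (m₀ * η / 2) (c * ε / 4) with he₀def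
    have he₀pos : 0 < e₀ := lt_min (by positivity) (by positivity)
    -- continuity of φ at 0 gives δ
    have hnhds : φ ⁻¹' Set.Iio e₀ ∈ 𝓝 (0 : Euc n) := by
      apply hN.continuous'.continuousAt.preimage_mem_nhds
      rw [hN.zero']
      exact Iio_mem_nhds he₀pos
    obtain ⟨δ, hδpos, hδball⟩ := Metric.mem_nhds_iff.mp hnhds
    refine ⟨δ, hδpos, ?_⟩
    rintro x ⟨hρx, hsx, htx⟩ y ⟨hρy, hsy, hty⟩ a ha b hb hxy
    set dx := distφ φ K x with hdxdef
    set dy := distφ φ K y with hdydef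
    have hdxpos : 0 < dx := lt_of_lt_of_le hs hsx
    have hdypos : 0 < dy := lt_of_lt_of_le hs hsy
    obtain ⟨a₀, ha₀N, huniqx, hscalex⟩ := witness hφ hlam hρx hdxpos
    have haa₀ : a = a₀ := huniqx a ha
    subst haa₀
    have haφ : φ (x - a) = dx := ha.2
    have haK : a ∈ K := ha.1
    have hbK : b ∈ K := hb.1
    have hbφ : φ (y - b) = dy := hb.2
    -- small quantity e
    set e := φ (x - y) with hedef
    have hesmall : e < e₀ := by
      have : x - y ∈ Metric.ball (0 : Euc n) δ := by
        simpa [mem_ball_zero_iff] using hxy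
      exact hδball this
    have henonneg : 0 ≤ e := hN.nonneg _
    -- distances comparisons
    set dxb := φ (x - b) with hdxbdef
    have hq1 : dx ≤ dxb := distφ_le hN hbK x
    have hq2 : dxb ≤ dx + 2 * e := by
      have htri : φ (x - b) ≤ φ (x - y) + φ (y - b) := by
        have h' := hN.2.2 (x - y) (y - b)
        have heq : (x - y) + (y - b) = x - b := by abel
        rwa [heq] at h'
      have h2 : φ (y - a) ≤ φ (y - x) + φ (x - a) := by
        have h' := hN.2.2 (y - x) (x - a)
        have heq : (y - x) + (x - a) = y - a := by abel
        rwa [heq] at h'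
      have h1 : dy ≤ φ (y - a) := distφ_le hN haK y
      have hyx : φ (y - x) = e := hN.sub_comm' y x
      have hee : φ (x - y) = e := hedef.symm
      have hdd : φ (x - b) = dxb := hdxbdef.symm
      have hyb : φ (y - b) = dy := hbφ
      linarith only [htri, h2, h1, hyx, hee, hdd, hyb, haφ]
    have hdxbpos : 0 < dxb := lt_of_lt_of_le hdxpos hq1
    -- p, q, u, v
    set p := (lam0 - 1) • (x - a) with hpdef
    set q := x - b with hqdef
    have hφp : φ p = (lam0 - 1) * dx := by
      rw [hpdef, hN.smul_nonneg' (by linarith) _, haφ]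
    have hφq : φ q = dxb := rfl
    have hφppos : 0 < φ p := by
      rw [hφp]; exact mul_pos (by linarith) hdxpos
    have hφqpos : 0 < φ q := hdxbpos
    -- φ (p + q) ≥ lam0 * dx
    have hx'd : distφ φ K (a + lam0 • (x - a)) = lam0 * dx :=
      hscalex lam0 (by linarith) le_rfl
    have hpq_eq : p + q = (a + lam0 • (x - a)) - b := by
      rw [hpdef, hqdef, sub_smul, one_smul]; abel
    have hpqge : lam0 * dx ≤ φ (p + q) := by
      have h' := distφ_le hN hbK (a + lam0 • (x - a))
      rw [hx'd] at h'
      rw [hpq_eq]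
      exact h'
    have hpqsum : φ p + φ q ≤ lam0 * dx + 2 * e := by
      rw [hφp, hφq]; linarith
    have hkey : φ p + φ q - 2 * e ≤ φ (p + q) := by linarith
    set u := (φ p)⁻¹ • p with hudef
    set v := (φ q)⁻¹ • q with hvdef
    have hφu : φ u = 1 := by
      rw [hudef, hN.smul_nonneg' (inv_nonneg.mpr hφppos.le) _,
        inv_mul_cancel₀ hφppos.ne']
    have hφv : φ v = 1 := by
      rw [hvdef, hN.smul_nonneg' (inv_nonneg.mpr hφqpos.le) _,
        inv_mul_cancel₀ hφqpos.ne']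
    have hpu : (φ p) • u = p := by
      rw [hudef, smul_smul, mul_inv_cancel₀ hφppos.ne', one_smul]
    have hqv : (φ q) • v = q := by
      rw [hvdef, smul_smul, mul_inv_cancel₀ hφqpos.ne', one_smul]
    have hm₀p : m₀ ≤ φ p := by
      refine le_trans (min_le_left _ _) ?_
      rw [hφp]
      exact mul_le_mul_of_nonneg_left hsx (by linarith)
    have hm₀q : m₀ ≤ φ q := by
      refine le_trans (min_le_right _ _) ?_
      rw [hφq]
      linarith
    have he₀1 : e₀ ≤ m₀ * η / 2 := min_le_left _ _
    have he₀2 : e₀ ≤ c * ε / 4 := min_le_right _ _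
    clear_value dx dy e dxb p q u v lam0 ε' m₀ e₀
    -- key convexity defect bound
    have hconv : 2 - 2 * e / m₀ ≤ φ (u + v) := by
      rcases le_total (φ p) (φ q) with hmin | hmin
      · have hdecomp : p + q = (φ p) • (u + v) + (φ q - φ p) • v := by
          have hmod1 : (φ p) • (u + v) + (φ q - φ p) • v = (φ p) • u + (φ q) • v := by
            module
          rw [hmod1, hpu, hqv]
        have hφle : φ (p + q) ≤ (φ p) * φ (u + v) + (φ q - φ p) := by
          have e0 := hN.2.2 ((φ p) • (u + v)) ((φ q - φ p) • v)
          have e1 : φ ((φ p) • (u + v)) = (φ p) * φ (u + v) :=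
            hN.smul_nonneg' hφppos.le _
          have e2 : φ ((φ q - φ p) • v) = (φ q - φ p) * φ v :=
            hN.smul_nonneg' (by linarith : (0:ℝ) ≤ φ q - φ p) _
          rw [e1, e2, hφv, mul_one] at e0
          calc φ (p + q) = φ ((φ p) • (u + v) + (φ q - φ p) • v) := by rw [hdecomp]
            _ ≤ _ := e0
        have h1 : 2 * (φ p) - 2 * e ≤ (φ p) * φ (u + v) := by
          linarith only [hkey, hφle]
        have hm : m₀ ≤ φ p := hm₀p
        have hkey2 : (2 - φ (u + v)) * m₀ ≤ 2 * e := by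
          rcases le_total (φ (u + v)) 2 with h' | h'
          · have hmm := mul_le_mul_of_nonneg_left hm
              (show (0:ℝ) ≤ 2 - φ (u + v) by linarith)
            linarith only [hmm, h1]
          · have hmm := mul_le_mul_of_nonneg_right
              (show 2 - φ (u + v) ≤ 0 by linarith) hm₀pos.le
            rw [zero_mul] at hmm
            linarith only [hmm, henonneg]
        have hfin := (le_div_iff₀ hm₀pos).mpr hkey2
        linarith only [hfin]
      · have hdecomp : p + q = (φ q) • (u + v) + (φ p - φ q) • u := by
          have hmod1 : (φ q) • (u + v) + (φ p - φ q) • u = (φ p) • u + (φ q) • v := by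
            module
          rw [hmod1, hpu, hqv]
        have hφle : φ (p + q) ≤ (φ q) * φ (u + v) + (φ p - φ q) := by
          have e0 := hN.2.2 ((φ q) • (u + v)) ((φ p - φ q) • u)
          have e1 : φ ((φ q) • (u + v)) = (φ q) * φ (u + v) :=
            hN.smul_nonneg' hφqpos.le _
          have e2 : φ ((φ p - φ q) • u) = (φ p - φ q) * φ u :=
            hN.smul_nonneg' (by linarith : (0:ℝ) ≤ φ p - φ q) _
          rw [e1, e2, hφu, mul_one] at e0
          calc φ (p + q) = φ ((φ q) • (u + v) + (φ p - φ q) • u) := by rw [hdecomp]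
            _ ≤ _ := e0
        have h1 : 2 * (φ q) - 2 * e ≤ (φ q) * φ (u + v) := by
          linarith only [hkey, hφle]
        have hm : m₀ ≤ φ q := hm₀q
        have hkey2 : (2 - φ (u + v)) * m₀ ≤ 2 * e := by
          rcases le_total (φ (u + v)) 2 with h' | h'
          · have hmm := mul_le_mul_of_nonneg_left hm
              (show (0:ℝ) ≤ 2 - φ (u + v) by linarith)
            linarith only [hmm, h1]
          · have hmm := mul_le_mul_of_nonneg_right
              (show 2 - φ (u + v) ≤ 0 by linarith) hm₀pos.le
            rw [zero_mul] at hmm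
            linarith only [hmm, henonneg]
        have hfin := (le_div_iff₀ hm₀pos).mpr hkey2
        linarith only [hfin]
    -- conclude ‖u - v‖ < ε'
    have hφuv : 2 - η < φ (u + v) := by
      have h2 : 2 * e / m₀ < η := by
        rw [div_lt_iff₀ hm₀pos]
        have h3 : 2 * e < 2 * e₀ := by linarith only [hesmall]
        have h4 : 2 * e₀ ≤ m₀ * η := by linarith only [he₀1]
        linarith only [h3, h4]
      linarith only [h2, hconv]
    have huv : ‖u - v‖ < ε' := by
      by_contra hcon
      push_neg at hcon
      have hmm := hmod u v hφu hφv hcon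
      linarith only [hmm, hφuv]
    -- final estimate
    have hxa : x - a = dx • u := by
      have hdx0 : dx ≠ 0 := hdxpos.ne'
      have hl0 : lam0 - 1 ≠ 0 := by
        have : (0:ℝ) < lam0 - 1 := by linarith
        exact this.ne'
      have h2' : dx • u = (dx * (φ p)⁻¹) • p := by rw [hudef, smul_smul]
      rw [h2', hφp, hpdef, smul_smul]
      have hsc : dx * ((lam0 - 1) * dx)⁻¹ * (lam0 - 1) = 1 := by
        field_simp
        try ring
      rw [hsc, one_smul]
    have hxb : x - b = dxb • v := by
      rw [hvdef, ← hφq, smul_smul, mul_inv_cancel₀ hφqpos.ne', one_smul, hqdef]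
    have hab : a - b = dx • (v - u) + (dxb - dx) • v := by
      have h1 : a = x - dx • u := by rw [← hxa]; abel
      have h2 : b = x - dxb • v := by rw [← hxb]; abel
      rw [h1, h2]; module
    have hvnorm : ‖v‖ ≤ 1 / c := by
      have := hlow v
      rw [hφv] at this
      rw [le_div_iff₀ hc, mul_comm]
      linarith
    have hnormab : ‖a - b‖ ≤ dx * ‖v - u‖ + (dxb - dx) * ‖v‖ := by
      rw [hab]
      calc ‖dx • (v - u) + (dxb - dx) • v‖
          ≤ ‖dx • (v - u)‖ + ‖(dxb - dx) • v‖ := norm_add_le _ _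
        _ = dx * ‖v - u‖ + (dxb - dx) * ‖v‖ := by
            rw [norm_smul, norm_smul, Real.norm_eq_abs, Real.norm_eq_abs,
              abs_of_nonneg hdxpos.le, abs_of_nonneg (by linarith)]
    have hterm1 : dx * ‖v - u‖ < ε / 2 := by
      have hvu : ‖v - u‖ < ε' := by rwa [norm_sub_rev]
      have : dx * ‖v - u‖ ≤ t * ‖v - u‖ :=
        mul_le_mul_of_nonneg_right htx (norm_nonneg _)
      have h2 : t * ‖v - u‖ < t * ε' := by
        apply mul_lt_mul_of_pos_left hvu htpos
      have h3 : t * ε' = ε / 2 := by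
        rw [hε'def]; field_simp
      linarith only [this, h2, h3]
    have hterm2 : (dxb - dx) * ‖v‖ < ε / 2 := by
      have h1 : (dxb - dx) * ‖v‖ ≤ (2 * e) * (1 / c) := by
        apply mul_le_mul (by linarith) hvnorm (norm_nonneg _) (by linarith)
      have h2 : (2 * e) * (1 / c) < ε / 2 := by
        rw [mul_one_div, div_lt_div_iff₀ hc (by norm_num : (0:ℝ) < 2)]
        have h3 : 4 * e < 4 * e₀ := by linarith only [hesmall]
        have h4 : 4 * e₀ ≤ c * ε := by linarith only [he₀2]
        linarith only [h3, h4]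
      linarith only [h1, h2]
    linarith only [hnormab, hterm1, hterm2]
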